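/- Identifiability of the variant block under independence and invertibility (discrete case): let X = f(Z_A, Z_B) with Z_A and Z_B independent discrete random variables and f injective. Suppose g(X) = (g₁(X), g₂(X)) satisfies H(g(X)) information-preservation I(X; g(X)) = H(X), and g₁(X) = h(Z_A) for some bijection h. Then I(X; g₂(X)) ≥ H(Z_B); if moreover g₂(X) is a function of Z_B, then H(g₂(X)) = H(Z_B) and g₂(X) determines Z_B. -/
import Mathlib


open Finset

/-- Pushforward pmf of a random variable `X` on a finite sample space with pmf `μ`. -/
noncomputable def pushpmf {Ω S : Type*} [Fintype Ω] [DecidableEq S]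
    (μ : Ω → ℝ) (X : Ω → S) : S → ℝ :=
  fun s => ∑ ω ∈ Finset.univ.filter (fun ω => X ω = s), μ ω

/-- Shannon entropy of a random variable on a finite sample space with pmf `μ`. -/
noncomputable def entRV {Ω S : Type*} [Fintype Ω] [Fintype S] [DecidableEq S]
    (μ : Ω → ℝ) (X : Ω → S) : ℝ :=
  -∑ s, pushpmf μ X s * Real.log (pushpmf μ X s)

/-- Mutual information `I(X; Y)` on a finite sample space with pmf `μ`. -/
noncomputable def mutInfo {Ω S T : Type*} [Fintype Ω] [Fintype S] [Fintype T]
    [DecidableEq S] [DecidableEq T] (μ : Ω → ℝ) (X : Ω → S) (Y : Ω → T) : ℝ :=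
  entRV μ X + entRV μ Y - entRV μ (fun ω => (X ω, Y ω))

/- Auxiliary lemmas -/

lemma le_pushpmf_apply {Ω S : Type*} [Fintype Ω] [DecidableEq S]
    (μ : Ω → ℝ) (h0 : ∀ ω, 0 ≤ μ ω) (Y : Ω → S) (ω : Ω) :
    μ ω ≤ pushpmf μ Y (Y ω) := by
  apply Finset.single_le_sum (f := μ) (fun i _ => h0 i)
  simp

lemma entRV_eq_sum_omega {Ω S : Type*} [Fintype Ω] [Fintype S] [DecidableEq S]
    (μ : Ω → ℝ) (Y : Ω → S) :
    entRV μ Y = -∑ ω, μ ω * Real.log (pushpmf μ Y (Y ω)) := by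
  unfold entRV
  congr 1
  rw [← Finset.sum_fiberwise Finset.univ Y (fun ω => μ ω * Real.log (pushpmf μ Y (Y ω)))]
  refine Finset.sum_congr rfl fun s _ => ?_
  rw [pushpmf, Finset.sum_mul]
  refine Finset.sum_congr rfl fun ω hω => ?_
  simp only [Finset.mem_filter] at hω
  rw [hω.2]
  rfl

lemma pushpmf_comp_inj {Ω S T : Type*} [Fintype Ω] [DecidableEq S] [DecidableEq T]
    (μ : Ω → ℝ) {ι : S → T} (hι : Function.Injective ι) (Y : Ω → S) (ω : Ω) :
    pushpmf μ (fun ω' => ι (Y ω')) (ι (Y ω)) = pushpmf μ Y (Y ω) := by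
  unfold pushpmf
  congr 1
  ext ω'
  simp [hι.eq_iff]

lemma entRV_comp_inj {Ω S T : Type*} [Fintype Ω] [Fintype S] [Fintype T]
    [DecidableEq S] [DecidableEq T]
    (μ : Ω → ℝ) {ι : S → T} (hι : Function.Injective ι) (Y : Ω → S) :
    entRV μ (fun ω => ι (Y ω)) = entRV μ Y := by
  rw [entRV_eq_sum_omega, entRV_eq_sum_omega]
  congr 1
  exact Finset.sum_congr rfl fun ω _ => by rw [pushpmf_comp_inj μ hι Y ω]

lemma entRV_pair_indep {Ω S T : Type*} [Fintype Ω] [Fintype S] [Fintype T]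
    [DecidableEq S] [DecidableEq T]
    (μ : Ω → ℝ) (h0 : ∀ ω, 0 ≤ μ ω) (Y : Ω → S) (Z : Ω → T)
    (hind : ∀ s t, pushpmf μ (fun ω => (Y ω, Z ω)) (s, t)
      = pushpmf μ Y s * pushpmf μ Z t) :
    entRV μ (fun ω => (Y ω, Z ω)) = entRV μ Y + entRV μ Z := by
  rw [entRV_eq_sum_omega, entRV_eq_sum_omega, entRV_eq_sum_omega, ← neg_add,
    ← Finset.sum_add_distrib]
  congr 1
  refine Finset.sum_congr rfl fun ω _ => ?_
  rcases eq_or_lt_of_le (h0 ω) with hz | hp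
  · simp [← hz]
  · have hY : 0 < pushpmf μ Y (Y ω) := lt_of_lt_of_le hp (le_pushpmf_apply μ h0 Y ω)
    have hZ : 0 < pushpmf μ Z (Z ω) := lt_of_lt_of_le hp (le_pushpmf_apply μ h0 Z ω)
    rw [hind, Real.log_mul hY.ne' hZ.ne', mul_add]

theorem variant_block_identifiability_discrete
    {Ω A B Xt U V : Type*} [Fintype Ω] [Fintype A] [Fintype B] [Fintype Xt]
    [Fintype U] [Fintype V] [DecidableEq A] [DecidableEq B] [DecidableEq Xt]
    [DecidableEq U] [DecidableEq V]
    (μ : Ω → ℝ) (hμ0 : ∀ ω, 0 ≤ μ ω) (hμ1 : ∑ ω, μ ω = 1)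
    (ZA : Ω → A) (ZB : Ω → B) (X : Ω → Xt) (f : A × B → Xt)
    (hf : Function.Injective f) (hX : ∀ ω, X ω = f (ZA ω, ZB ω))
    (hAB_indep : ∀ a b, pushpmf μ (fun ω => (ZA ω, ZB ω)) (a, b)
      = pushpmf μ ZA a * pushpmf μ ZB b)
    (g₁ : Xt → U) (g₂ : Xt → V) (h : A → U) (hh : Function.Bijective h)
    (hg₁ : ∀ ω, g₁ (X ω) = h (ZA ω))
    (hg_indep : ∀ u v, pushpmf μ (fun ω => (g₁ (X ω), g₂ (X ω))) (u, v)
      = pushpmf μ (fun ω => g₁ (X ω)) u * pushpmf μ (fun ω => g₂ (X ω)) v)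
    (hinfo : mutInfo μ X (fun ω => (g₁ (X ω), g₂ (X ω))) = entRV μ X) :
    entRV μ ZB ≤ mutInfo μ X (fun ω => g₂ (X ω)) ∧
      ((∃ φ : B → V, ∀ ω, g₂ (X ω) = φ (ZB ω)) →
        entRV μ (fun ω => g₂ (X ω)) = entRV μ ZB ∧
        ∀ ω ω', g₂ (X ω) = g₂ (X ω') → 0 < μ ω → 0 < μ ω' → ZB ω = ZB ω') := by
  classical
  -- H(X) = H(Z_A) + H(Z_B)
  have hXfun : X = fun ω => f (ZA ω, ZB ω) := funext hX
  have hHX : entRV μ X = entRV μ ZA + entRV μ ZB := by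
    rw [hXfun, entRV_comp_inj μ hf (fun ω => (ZA ω, ZB ω)),
      entRV_pair_indep μ hμ0 ZA ZB (fun a b => hAB_indep a b)]
  -- H(g₁(X)) = H(Z_A)
  have hg₁fun : (fun ω => g₁ (X ω)) = fun ω => h (ZA ω) := funext hg₁
  have hHg₁ : entRV μ (fun ω => g₁ (X ω)) = entRV μ ZA := by
    rw [hg₁fun, entRV_comp_inj μ hh.injective ZA]
  -- post-processings of X: H(X, k(X)) = H(X)
  have hjointg : entRV μ (fun ω => (X ω, (g₁ (X ω), g₂ (X ω)))) = entRV μ X := by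
    have hinj : Function.Injective (fun x : Xt => (x, (g₁ x, g₂ x))) :=
      fun x y hxy => congrArg Prod.fst hxy
    exact entRV_comp_inj μ hinj X
  have hjointg₂ : entRV μ (fun ω => (X ω, g₂ (X ω))) = entRV μ X := by
    have hinj : Function.Injective (fun x : Xt => (x, g₂ x)) :=
      fun x y hxy => congrArg Prod.fst hxy
    exact entRV_comp_inj μ hinj X
  -- From information preservation: H(g₁(X), g₂(X)) = H(X)
  have hHg : entRV μ (fun ω => (g₁ (X ω), g₂ (X ω))) = entRV μ X := by
    have := hinfo
    rw [mutInfo, hjointg] at this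
    linarith
  -- Independence of blocks: H(g₂(X)) = H(Z_B)
  have hHg₂ : entRV μ (fun ω => g₂ (X ω)) = entRV μ ZB := by
    have := entRV_pair_indep μ hμ0 (fun ω => g₁ (X ω)) (fun ω => g₂ (X ω)) hg_indep
    rw [hHg, hHX, hHg₁] at this
    linarith
  have hmut : mutInfo μ X (fun ω => g₂ (X ω)) = entRV μ ZB := by
    rw [mutInfo, hjointg₂, hHg₂]; ring
  refine ⟨le_of_eq hmut.symm, ?_⟩
  rintro ⟨φ, hφ⟩
  refine ⟨hHg₂, ?_⟩
  -- equality case: φ must be injective on the support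
  have hφfun : (fun ω => g₂ (X ω)) = fun ω => φ (ZB ω) := funext hφ
  set p : B → ℝ := pushpmf μ ZB with hp
  set q : V → ℝ := pushpmf μ (fun ω => φ (ZB ω)) with hq
  have hpq : ∀ ω, p (ZB ω) ≤ q (φ (ZB ω)) := by
    intro ω
    apply Finset.sum_le_sum_of_subset_of_nonneg
    · intro ω' hω'
      simp only [Finset.mem_filter, Finset.mem_univ, true_and] at hω' ⊢
      rw [hω']
    · intro i _ _; exact hμ0 i
  -- each term of the entropy-difference sum vanishes
  have hsum0 : ∑ ω, μ ω * (Real.log (q (φ (ZB ω))) - Real.log (p (ZB ω))) = 0 := by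
    have h1 : entRV μ (fun ω => φ (ZB ω)) = entRV μ ZB := by rw [← hφfun, hHg₂]
    rw [entRV_eq_sum_omega, entRV_eq_sum_omega] at h1
    have : ∑ ω, μ ω * (Real.log (q (φ (ZB ω))) - Real.log (p (ZB ω)))
        = (∑ ω, μ ω * Real.log (q (φ (ZB ω)))) - ∑ ω, μ ω * Real.log (p (ZB ω)) := by
      rw [← Finset.sum_sub_distrib]; exact Finset.sum_congr rfl fun ω _ => by ring
    rw [this]
    have h1' : ∑ ω, μ ω * Real.log (q (φ (ZB ω))) = ∑ ω, μ ω * Real.log (p (ZB ω)) := by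
      have := neg_injective h1
      exact this
    linarith
  have hterm : ∀ ω, 0 ≤ μ ω * (Real.log (q (φ (ZB ω))) - Real.log (p (ZB ω))) := by
    intro ω
    rcases eq_or_lt_of_le (hμ0 ω) with hz | hpos
    · simp [← hz]
    · have hpω : 0 < p (ZB ω) := lt_of_lt_of_le hpos (le_pushpmf_apply μ hμ0 ZB ω)
      have : Real.log (p (ZB ω)) ≤ Real.log (q (φ (ZB ω))) :=
        Real.log_le_log hpω (hpq ω)
      nlinarith
  have hall : ∀ ω, μ ω * (Real.log (q (φ (ZB ω))) - Real.log (p (ZB ω))) = 0 := by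
    intro ω
    have := (Finset.sum_eq_zero_iff_of_nonneg (fun i _ => hterm i)).mp hsum0
    exact this ω (Finset.mem_univ ω)
  intro ω ω' heq hω hω'
  by_contra hne
  -- q (φ (ZB ω)) = p (ZB ω) from vanishing term
  have hpω : 0 < p (ZB ω) := lt_of_lt_of_le hω (le_pushpmf_apply μ hμ0 ZB ω)
  have hqω : 0 < q (φ (ZB ω)) := lt_of_lt_of_le hpω (hpq ω)
  have hlogeq : Real.log (q (φ (ZB ω))) = Real.log (p (ZB ω)) := by
    have := hall ω
    have h2 : Real.log (q (φ (ZB ω))) - Real.log (p (ZB ω)) = 0 := by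
      rcases mul_eq_zero.mp this with h | h
      · exact absurd h hω.ne'
      · exact h
    linarith
  have heqqp : q (φ (ZB ω)) = p (ZB ω) :=
    Real.log_injOn_pos (Set.mem_Ioi.mpr hqω) (Set.mem_Ioi.mpr hpω) hlogeq
  -- but the fiber of φ(ZB ω) contains ω' as well, giving strict inequality
  have hφeq : φ (ZB ω') = φ (ZB ω) := by rw [← hφ, ← hφ, heq]
  have hkey : p (ZB ω) + μ ω' ≤ q (φ (ZB ω)) := by
    have hsub : insert ω' (Finset.univ.filter (fun ω'' => ZB ω'' = ZB ω))
        ⊆ Finset.univ.filter (fun ω'' => φ (ZB ω'') = φ (ZB ω)) := by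
      intro i hi
      simp only [Finset.mem_insert, Finset.mem_filter, Finset.mem_univ, true_and] at hi ⊢
      rcases hi with rfl | hi
      · exact hφeq
      · rw [hi]
    have hnot : ω' ∉ Finset.univ.filter (fun ω'' => ZB ω'' = ZB ω) := by
      simp only [Finset.mem_filter, Finset.mem_univ, true_and]
      exact fun hc => hne hc.symm
    calc p (ZB ω) + μ ω'
        = ∑ i ∈ insert ω' (Finset.univ.filter (fun ω'' => ZB ω'' = ZB ω)), μ i := by
          rw [Finset.sum_insert hnot]
          simp only [hp, pushpmf]
          ring
      _ ≤ q (φ (ZB ω)) :=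
          Finset.sum_le_sum_of_subset_of_nonneg hsub (fun i _ _ => hμ0 i)
  linarith
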